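/- Suppose I is a κ-complete ideal over κ and P(κ)/I is complete. If G is generic for P(κ)/I − {0} and in the extension there are functions g_n : κ → V (n ∈ ω) in the ground model with [X] forcing g_n to represent a descending ω-sequence in the generic ultrapower, then the sets T_n = {i < κ : g_{n+1}(i) < g_n(i)} satisfy [X] ≤ [T_n] for all n, and hence X ∩ ⋂_n T_n ≠ ∅, yielding a contradiction; consequently no condition forces the generic ultrapower of the ordinals to be ill-founded via ground-model functions into the ordinals bounded by a fixed g₀. -/

import Mathlib

universe u

/-- A proper, κ-complete ideal on `P(κ)` (κ realized as the type `α`)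
containing all singletons. -/
structure IdealOver (α : Type u) where
  carrier : Set (Set α)
  proper : Set.univ ∉ carrier
  downward : ∀ {A B : Set α}, A ⊆ B → B ∈ carrier → A ∈ carrier
  singleton_mem : ∀ x : α, {x} ∈ carrier
  complete : ∀ s : Set (Set α), Cardinal.mk ↥s < Cardinal.mk α → s ⊆ carrier →
    ⋃₀ s ∈ carrier

/-- `𝒜` is an antichain with respect to `I`. -/
def IsAntichainFor {α : Type u} (I : IdealOver α) (𝒜 : Set (Set α)) : Prop :=
  (∀ A ∈ 𝒜, A ∉ I.carrier) ∧ ∀ A ∈ 𝒜, ∀ B ∈ 𝒜, A ≠ B → A ∩ B ∈ I.carrier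

/-- `[Z]` is a least upper bound of `{[A] : A ∈ F}` in `P(α)/I`, where
`[A] ≤ [B]` iff `A \ B ∈ I`. -/
def IsSupFor {α : Type u} (I : IdealOver α) (F : Set (Set α)) (Z : Set α) : Prop :=
  (∀ A ∈ F, A \ Z ∈ I.carrier) ∧
    ∀ W : Set α, (∀ A ∈ F, A \ W ∈ I.carrier) → Z \ W ∈ I.carrier

/-- The quotient Boolean algebra `P(α)/I` is complete. -/
def QuotComplete {α : Type u} (I : IdealOver α) : Prop :=
  ∀ F : Set (Set α), ∃ Z : Set α, IsSupFor I F Z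

/-- if `X` is `I`-positive and ground-model functions
`g n : κ → Ord` satisfy `[X] ≤ [T n]` for `T n = {i : g (n+1) i < g n i}`
(i.e. `X \ T n ∈ I`), then a contradiction follows: by σ-completeness
`X ∩ ⋂ n T n ≠ ∅`, and any point there yields an infinite descending sequence
of ordinals. -/
theorem stmt13 {α : Type} (I : IdealOver α)
    (huncount : Cardinal.aleph0 < Cardinal.mk α)
    (hcomp : QuotComplete I)
    (X : Set α) (hX : X ∉ I.carrier)
    (g : ℕ → α → Ordinal.{0})
    (hT : ∀ n : ℕ, X \ {i : α | g (n + 1) i < g n i} ∈ I.carrier) :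
    False := by
  -- Either X ∩ ⋂ T n is nonempty (descending ordinals, contradiction),
  -- or X ⊆ ⋃ n (X \ T n) ∈ I.
  by_cases h : ∃ i ∈ X, ∀ n : ℕ, g (n+1) i < g n i
  · obtain ⟨i, -, hi⟩ := h
    exact (RelEmbedding.natGT (fun n => g n i) hi).not_wellFounded
      Ordinal.lt_wf
  · push_neg at h
    apply hX
    have hsub : X ⊆ ⋃₀ (Set.range (fun n : ℕ => X \ {i : α | g (n+1) i < g n i})) := by
      intro x hx
      obtain ⟨n, hn⟩ := h x hx
      exact ⟨_, ⟨n, rfl⟩, hx, not_lt.2 hn⟩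
    refine I.downward hsub (I.complete _ ?_ ?_)
    · exact lt_of_le_of_lt (Cardinal.mk_range_le.trans (by simp)) huncount
    · rintro s ⟨n, rfl⟩
      exact hT n
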